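/- Let μ, ν be probability measures on ℝ with finite p-th moments (p ≥ 1), with cumulative distribution functions F_μ, F_ν and quantile (generalized inverse) functions F_μ^{-1}, F_ν^{-1}. Then W_p(μ,ν)^p = ∫₀¹ |F_μ^{-1}(u) − F_ν^{-1}(u)|^p du. -/

import Mathlib

open MeasureTheory

/-- Cumulative distribution function of a measure on ℝ. -/
noncomputable def cdfFun (μ : Measure ℝ) : ℝ → ℝ := fun x => (μ (Set.Iic x)).toReal

/-- Quantile function (generalized inverse of the cdf). -/
noncomputable def quantileFun (μ : Measure ℝ) : ℝ → ℝ :=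
  fun u => sInf {x : ℝ | u ≤ cdfFun μ x}

open Set Filter
open scoped Topology

variable {μ : Measure ℝ} [IsProbabilityMeasure μ]

lemma cdfFun_eq_cdf (μ : Measure ℝ) [IsProbabilityMeasure μ] :
    cdfFun μ = ProbabilityTheory.cdf μ := by
  funext x; rw [cdfFun, ProbabilityTheory.cdf_eq_real, measureReal_def]

lemma cdfFun_mono : Monotone (cdfFun μ) := by
  rw [cdfFun_eq_cdf]; exact ProbabilityTheory.monotone_cdf μ

lemma cdfFun_nonneg (x : ℝ) : 0 ≤ cdfFun μ x := by
  rw [cdfFun_eq_cdf]; exact ProbabilityTheory.cdf_nonneg μ x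

lemma cdfFun_le_one (x : ℝ) : cdfFun μ x ≤ 1 := by
  rw [cdfFun_eq_cdf]; exact ProbabilityTheory.cdf_le_one μ x

lemma quantileSet_upward {u x z : ℝ} (h : u ≤ cdfFun μ x) (hxz : x ≤ z) :
    u ≤ cdfFun μ z := h.trans (cdfFun_mono hxz)

lemma quantileSet_nonempty {u : ℝ} (hu : u < 1) : {x : ℝ | u ≤ cdfFun μ x}.Nonempty := by
  have h := ProbabilityTheory.tendsto_cdf_atTop μ
  rw [← cdfFun_eq_cdf] at h
  have h2 : ∀ᶠ x in atTop, u < cdfFun μ x := h.eventually_const_lt hu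
  rcases h2.exists with ⟨x, hx⟩
  exact ⟨x, hx.le⟩

lemma quantileSet_bddBelow {u : ℝ} (hu : 0 < u) : BddBelow {x : ℝ | u ≤ cdfFun μ x} := by
  have h := ProbabilityTheory.tendsto_cdf_atBot μ
  rw [← cdfFun_eq_cdf] at h
  have h2 : ∀ᶠ x in atBot, cdfFun μ x < u := h.eventually_lt_const hu
  rcases h2.exists with ⟨y, hy⟩
  refine ⟨y, fun x hx => ?_⟩
  by_contra hc
  push_neg at hc
  exact absurd (quantileSet_upward hx hc.le) (not_le.mpr hy)


lemma cdfFun_quantile_ge {u : ℝ} (hu0 : 0 < u) (hu1 : u < 1) :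
    u ≤ cdfFun μ (quantileFun μ u) := by
  set S := {x : ℝ | u ≤ cdfFun μ x} with hS
  set c := sInf S with hc
  have hne : S.Nonempty := quantileSet_nonempty hu1
  have hbdd : BddBelow S := quantileSet_bddBelow hu0
  have hmem : ∀ x, c < x → u ≤ cdfFun μ x := by
    intro x hx
    obtain ⟨z, hz, hzx⟩ := exists_lt_of_csInf_lt hne hx
    exact quantileSet_upward hz hzx.le
  have hrc : ContinuousWithinAt (cdfFun μ) (Ici c) c := by
    rw [cdfFun_eq_cdf]
    exact (ProbabilityTheory.cdf μ).right_continuous c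
  have htendsto : Tendsto (cdfFun μ) (𝓝[>] c) (𝓝 (cdfFun μ c)) :=
    hrc.mono Ioi_subset_Ici_self
  refine ge_of_tendsto htendsto ?_
  exact eventually_nhdsWithin_of_forall fun x hx => hmem x hx

lemma quantile_le_iff {u x : ℝ} (hu0 : 0 < u) (hu1 : u < 1) :
    quantileFun μ u ≤ x ↔ u ≤ cdfFun μ x := by
  constructor
  · intro h
    exact (cdfFun_quantile_ge hu0 hu1).trans (cdfFun_mono h)
  · intro h
    exact csInf_le (quantileSet_bddBelow hu0) h

lemma lt_quantile_iff {u x : ℝ} (hu0 : 0 < u) (hu1 : u < 1) :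
    x < quantileFun μ u ↔ cdfFun μ x < u := by
  rw [← not_le, ← not_le, quantile_le_iff hu0 hu1]

lemma quantile_monoOn {u v : ℝ} (hu0 : 0 < u) (hv1 : v < 1) (huv : u ≤ v) :
    quantileFun μ u ≤ quantileFun μ v :=
  csInf_le_csInf (quantileSet_bddBelow hu0) (quantileSet_nonempty hv1)
    (fun x hx => le_trans huv hx)


/-- Measurable version of the quantile function (junk value 0 outside (0,1)). -/
noncomputable def qf (μ : Measure ℝ) : ℝ → ℝ :=
  fun u => if 0 < u ∧ u < 1 then quantileFun μ u else 0

lemma qf_eq_quantile {u : ℝ} (hu0 : 0 < u) (hu1 : u < 1) : qf μ u = quantileFun μ u := by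
  rw [qf, if_pos ⟨hu0, hu1⟩]

lemma qf_measurable : Measurable (qf μ) := by
  refine measurable_of_Iic (fun c => ?_)
  have : qf μ ⁻¹' Iic c =
      (Ioo (0:ℝ) 1 ∩ Iic (cdfFun μ c)) ∪ ((Ioo (0:ℝ) 1)ᶜ ∩ {u : ℝ | (0:ℝ) ≤ c}) := by
    ext u
    by_cases hu : 0 < u ∧ u < 1
    · simp only [mem_preimage, mem_Iic, qf, if_pos hu, mem_union, mem_inter_iff, mem_Ioo,
        mem_compl_iff, mem_setOf_eq, hu.1, hu.2, and_self, true_and, not_true_eq_false,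
        false_and, or_false]
      exact quantile_le_iff hu.1 hu.2
    · simp only [mem_preimage, mem_Iic, qf, if_neg hu, mem_union, mem_inter_iff, mem_Ioo,
        mem_compl_iff, mem_setOf_eq, hu, false_and, not_false_eq_true, true_and, false_or,
        if_false]
  rw [this]
  exact ((measurableSet_Ioo.inter measurableSet_Iic).union
    (measurableSet_Ioo.compl.inter (MeasurableSet.const _)))

/-- Lebesgue measure restricted to (0,1). -/
noncomputable def leb01 : Measure ℝ := volume.restrict (Ioo 0 1)

instance : IsProbabilityMeasure (leb01) := by
  constructor
  rw [leb01, Measure.restrict_apply MeasurableSet.univ, univ_inter, Real.volume_Ioo]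
  norm_num

lemma map_qf_eq (μ : Measure ℝ) [IsProbabilityMeasure μ] : Measure.map (qf μ) leb01 = μ := by
  have hqm : Measurable (qf μ) := qf_measurable
  have : IsProbabilityMeasure (Measure.map (qf μ) leb01) :=
    Measure.isProbabilityMeasure_map hqm.aemeasurable
  refine Measure.ext_of_Iic _ μ (fun x => ?_)
  rw [Measure.map_apply hqm measurableSet_Iic]
  have hpre : qf μ ⁻¹' Iic x ∩ Ioo 0 1 = Ioo 0 1 ∩ Iic (cdfFun μ x) := by
    ext u
    simp only [mem_inter_iff, mem_preimage, mem_Iic, mem_Ioo]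
    constructor
    · rintro ⟨h1, h2⟩
      refine ⟨h2, ?_⟩
      rw [qf, if_pos ⟨h2.1, h2.2⟩] at h1
      exact (quantile_le_iff h2.1 h2.2).mp h1
    · rintro ⟨h2, h1⟩
      refine ⟨?_, h2⟩
      rw [qf, if_pos ⟨h2.1, h2.2⟩]
      exact (quantile_le_iff h2.1 h2.2).mpr h1
  rw [leb01, Measure.restrict_apply (hqm measurableSet_Iic), hpre]
  have h0 : 0 ≤ cdfFun μ x := cdfFun_nonneg x
  have h1 : cdfFun μ x ≤ 1 := cdfFun_le_one x
  have hIic : μ (Iic x) = ENNReal.ofReal (cdfFun μ x) := by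
    rw [cdfFun_eq_cdf]
    exact (ProbabilityTheory.ofReal_cdf μ x).symm
  rcases eq_or_lt_of_le h1 with h1e | h1l
  · have : Ioo (0:ℝ) 1 ∩ Iic (cdfFun μ x) = Ioo 0 1 := by
      rw [inter_eq_left]
      intro u hu
      exact le_of_lt (h1e ▸ hu.2)
    rw [this, Real.volume_Ioo, hIic, ← h1e]
    norm_num
  · have : Ioo (0:ℝ) 1 ∩ Iic (cdfFun μ x) = Ioc 0 (cdfFun μ x) := by
      ext u
      simp only [mem_inter_iff, mem_Ioo, mem_Iic, mem_Ioc]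
      constructor
      · rintro ⟨⟨a, b⟩, c⟩; exact ⟨a, c⟩
      · rintro ⟨a, c⟩; exact ⟨⟨a, lt_of_le_of_lt c h1l⟩, c⟩
    rw [this, Real.volume_Ioc, hIic, sub_zero]

/-! ### The derivative of `|t| ^ p` -/

section Hder

/-- (a version of) the derivative of `t ↦ |t| ^ p`. -/
noncomputable def hder (p : ℝ) : ℝ → ℝ :=
  fun t => if t < 0 then -(p * (-t) ^ (p - 1)) else p * t ^ (p - 1)

variable {p : ℝ} (hp : 1 ≤ p)

include hp

lemma hder_measurable : Measurable (hder p) := by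
  have hc : Continuous fun t : ℝ => t ^ (p - 1) :=
    Real.continuous_rpow_const (by linarith)
  refine Measurable.ite measurableSet_Iio ?_ ?_
  · exact ((measurable_const.mul ((hc.comp continuous_neg).measurable)).neg)
  · exact measurable_const.mul hc.measurable

lemma hder_nonneg_of_nonneg {t : ℝ} (ht : 0 ≤ t) : 0 ≤ hder p t := by
  rw [hder, if_neg (not_lt.mpr ht)]
  exact mul_nonneg (by linarith) (Real.rpow_nonneg ht _)

lemma hder_mono : Monotone (hder p) := by
  intro a b hab
  rcases lt_or_ge a 0 with ha | ha
  · rcases lt_or_ge b 0 with hb | hb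
    · rw [hder, if_pos ha, hder, if_pos hb, neg_le_neg_iff]
      have : (0:ℝ) ≤ -b := by linarith
      exact mul_le_mul_of_nonneg_left
        (Real.rpow_le_rpow this (by linarith) (by linarith)) (by linarith)
    · refine le_trans ?_ (hder_nonneg_of_nonneg hp hb)
      rw [hder, if_pos ha, neg_nonpos]
      exact mul_nonneg (by linarith) (Real.rpow_nonneg (by linarith) _)
  · rw [hder, if_neg (not_lt.mpr ha), hder, if_neg (not_lt.mpr (le_trans ha hab))]
    exact mul_le_mul_of_nonneg_left (Real.rpow_le_rpow ha hab (by linarith)) (by linarith)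

lemma abs_hder (t : ℝ) : |hder p t| = p * |t| ^ (p - 1) := by
  rcases lt_or_ge t 0 with ht | ht
  · rw [hder, if_pos ht, abs_neg,
      abs_of_nonneg (mul_nonneg (by linarith) (Real.rpow_nonneg (by linarith) _)),
      abs_of_neg ht]
  · rw [hder, if_neg (not_lt.mpr ht),
      abs_of_nonneg (mul_nonneg (by linarith) (Real.rpow_nonneg ht _)),
      abs_of_nonneg ht]

lemma hder_intervalIntegrable (a b : ℝ) : IntervalIntegrable (hder p) volume a b :=
  (hder_mono hp).intervalIntegrable

lemma hder_shift_intervalIntegrable (y a b : ℝ) :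
    IntervalIntegrable (fun s => hder p (s - y)) volume a b := by
  have : Monotone (fun s => hder p (s - y)) :=
    fun s t hst => hder_mono hp (by linarith)
  exact this.intervalIntegrable

lemma integral_hder_nonneg {b : ℝ} (hb : 0 ≤ b) : ∫ t in (0:ℝ)..b, hder p t = b ^ p := by
  have hcongr : EqOn (hder p) (fun t => p * t ^ (p - 1)) (Set.uIcc 0 b) := by
    intro t ht
    rw [Set.uIcc_of_le hb] at ht
    rw [hder, if_neg (not_lt.mpr ht.1)]
  rw [intervalIntegral.integral_congr hcongr, intervalIntegral.integral_const_mul,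
    integral_rpow (Or.inl (by linarith)), sub_add_cancel,
    Real.zero_rpow (by intro h; rw [h] at hp; linarith), sub_zero]
  field_simp

lemma integral_hder (b : ℝ) : ∫ t in (0:ℝ)..b, hder p t = |b| ^ p := by
  rcases le_or_gt 0 b with hb | hb
  · rw [integral_hder_nonneg hp hb, abs_of_nonneg hb]
  · have h1 : ∫ x in (0:ℝ)..(-b), hder p (-x) = ∫ x in b..(0:ℝ), hder p x := by
      simpa using intervalIntegral.integral_comp_neg (a := (0:ℝ)) (b := -b) (hder p)
    have h2 : ∫ x in (0:ℝ)..(-b), hder p (-x) = ∫ x in (0:ℝ)..(-b), -(hder p x) := by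
      refine intervalIntegral.integral_congr_ae (MeasureTheory.ae_of_all _ fun x hx => ?_)
      rw [Set.uIoc_of_le (by linarith : (0:ℝ) ≤ -b)] at hx
      have hx0 : 0 < x := hx.1
      rw [hder, if_pos (by linarith : -x < 0), hder, if_neg (not_lt.mpr hx0.le), neg_neg]
    rw [intervalIntegral.integral_symm, ← h1, h2, intervalIntegral.integral_neg,
      integral_hder_nonneg hp (by linarith : (0:ℝ) ≤ -b), neg_neg, abs_of_neg hb]

lemma hder_star (x y : ℝ) :
    ∫ s in (0:ℝ)..x, (hder p s - hder p (s - y)) = |x| ^ p + |y| ^ p - |x - y| ^ p := by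
  have hint1 := hder_intervalIntegrable hp 0 x
  have hint2 := hder_shift_intervalIntegrable hp y 0 x
  rw [intervalIntegral.integral_sub hint1 hint2, integral_hder hp x]
  have hshift : ∫ s in (0:ℝ)..x, hder p (s - y) = ∫ t in (0 - y)..(x - y), hder p t :=
    intervalIntegral.integral_comp_sub_right _ y
  have hadd : (∫ t in (0 - y)..(0:ℝ), hder p t) + ∫ t in (0:ℝ)..(x - y), hder p t
      = ∫ t in (0 - y)..(x - y), hder p t :=
    intervalIntegral.integral_add_adjacent_intervals
      (hder_intervalIntegrable hp _ _) (hder_intervalIntegrable hp _ _)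
  have hneg : (∫ t in (0 - y)..(0:ℝ), hder p t) = - |y| ^ p := by
    rw [intervalIntegral.integral_symm, integral_hder hp, zero_sub, abs_neg]
  rw [hshift, ← hadd, hneg, integral_hder hp]
  ring

end Hder

/-! ### Transfer lemmas -/

lemma integral_qf (ν : Measure ℝ) [IsProbabilityMeasure ν] {f : ℝ → ℝ}
    (hf : AEStronglyMeasurable f ν) : ∫ y, f y ∂ν = ∫ u, f (qf ν u) ∂leb01 := by
  have h := integral_map (μ := leb01) (φ := qf ν) (qf_measurable (μ := ν)).aemeasurable
      (f := f) (by rw [map_qf_eq]; exact hf)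
  rw [map_qf_eq] at h
  exact h

lemma integrable_qf (ν : Measure ℝ) [IsProbabilityMeasure ν] {f : ℝ → ℝ}
    (hf : Integrable f ν) : Integrable (fun u => f (qf ν u)) leb01 := by
  have := (integrable_map_measure (by rw [map_qf_eq]; exact hf.aestronglyMeasurable)
    (qf_measurable (μ := ν)).aemeasurable).mp (by rw [map_qf_eq]; exact hf)
  exact this

lemma integral_snd (γ : Measure (ℝ × ℝ)) {ν : Measure ℝ} (hγ2 : γ.map Prod.snd = ν)
    {f : ℝ → ℝ} (hf : AEStronglyMeasurable f ν) :
    ∫ q, f q.2 ∂γ = ∫ y, f y ∂ν := by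
  rw [← hγ2]
  exact (integral_map measurable_snd.aemeasurable (by rw [hγ2]; exact hf)).symm

lemma integrable_snd (γ : Measure (ℝ × ℝ)) {ν : Measure ℝ} (hγ2 : γ.map Prod.snd = ν)
    {f : ℝ → ℝ} (hf : Integrable f ν) : Integrable (fun q => f q.2) γ := by
  have := (integrable_map_measure (by rw [hγ2]; exact hf.aestronglyMeasurable)
    measurable_snd.aemeasurable).mp (by rw [hγ2]; exact hf)
  exact this

lemma integrable_fst (γ : Measure (ℝ × ℝ)) {μ : Measure ℝ} (hγ1 : γ.map Prod.fst = μ)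
    {f : ℝ → ℝ} (hf : Integrable f μ) : Integrable (fun q => f q.1) γ := by
  have := (integrable_map_measure (by rw [hγ1]; exact hf.aestronglyMeasurable)
    measurable_fst.aemeasurable).mp (by rw [hγ1]; exact hf)
  exact this

/-! ### The key one-sided rearrangement inequality (Lemma A) -/

lemma lemmaA {μ ν : Measure ℝ} [IsProbabilityMeasure μ] [IsProbabilityMeasure ν]
    (γ : Measure (ℝ × ℝ)) [IsProbabilityMeasure γ]
    (hγ1 : γ.map Prod.fst = μ) (hγ2 : γ.map Prod.snd = ν)
    {b : ℝ → ℝ} (hbmono : Monotone b) (hbint : Integrable b ν) (s : ℝ) :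
    ∫ q, (Set.Ioi s).indicator (fun _ => (1:ℝ)) q.1 * b q.2 ∂γ
      ≤ ∫ u in Ioo (cdfFun μ s) 1, b (qf ν u) := by
  have hAmeas : MeasurableSet {q : ℝ × ℝ | s < q.1} :=
    measurable_fst measurableSet_Ioi
  have hind : ∀ (c : ℝ × ℝ → ℝ) (q : ℝ × ℝ),
      (Set.Ioi s).indicator (fun _ => (1:ℝ)) q.1 * c q
        = {q : ℝ × ℝ | s < q.1}.indicator c q := by
    intro c q
    by_cases hq : s < q.1
    · rw [Set.indicator_of_mem (show q.1 ∈ Ioi s from hq),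
        Set.indicator_of_mem (show q ∈ {q : ℝ × ℝ | s < q.1} from hq), one_mul]
    · rw [Set.indicator_of_notMem (show q.1 ∉ Ioi s from hq),
        Set.indicator_of_notMem (show q ∉ {q : ℝ × ℝ | s < q.1} from hq), zero_mul]
  have hγA : γ {q : ℝ × ℝ | s < q.1} = μ (Ioi s) := by
    rw [← hγ1, Measure.map_apply measurable_fst measurableSet_Ioi]; rfl
  have hbγ : Integrable (fun q : ℝ × ℝ => b q.2) γ := integrable_snd γ hγ2 hbint
  have hbqf : Integrable (fun u => b (qf ν u)) leb01 := integrable_qf ν hbint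
  set F := cdfFun μ s with hF
  have hF0 : 0 ≤ F := cdfFun_nonneg s
  have hF1 : F ≤ 1 := cdfFun_le_one s
  have hμIic : μ (Iic s) = ENNReal.ofReal F := by
    rw [hF, cdfFun_eq_cdf]; exact (ProbabilityTheory.ofReal_cdf μ s).symm
  rcases eq_or_lt_of_le hF1 with hFeq1 | hFlt1
  · -- F = 1 : both sides are 0
    have hμIoi : μ (Ioi s) = 0 := by
      have : μ (Iic s) = 1 := by rw [hμIic, hFeq1]; simp
      have hcompl : μ (Iic s)ᶜ = 1 - μ (Iic s) := prob_compl_eq_one_sub measurableSet_Iic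
      rw [compl_Iic] at hcompl
      rw [hcompl, this]; simp
    have hzero : ∀ᵐ q ∂γ, (Set.Ioi s).indicator (fun _ => (1:ℝ)) q.1 * b q.2 = 0 := by
      have : γ {q : ℝ × ℝ | s < q.1} = 0 := by rw [hγA, hμIoi]
      filter_upwards [measure_eq_zero_iff_ae_notMem.mp this] with q hq
      have hq' : ¬ s < q.1 := hq
      rw [Set.indicator_of_notMem (show q.1 ∉ Ioi s from hq'), zero_mul]
    rw [integral_eq_zero_of_ae hzero]
    have : Ioo F 1 = (∅ : Set ℝ) := by rw [← hFeq1]; exact Ioo_self F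
    rw [this]
    simp
  · rcases eq_or_lt_of_le hF0 with hFeq0 | hFlt0
    · -- F = 0 : indicator is a.e. 1, equality of the two sides
      have hμIic0 : μ (Iic s) = 0 := by
        rw [hμIic, ← hFeq0]; simp
      have hγc : γ {q : ℝ × ℝ | ¬ s < q.1} = 0 := by
        have : {q : ℝ × ℝ | ¬ s < q.1} = Prod.fst ⁻¹' (Iic s) := by
          ext q; simp [not_lt]
        rw [this, ← Measure.map_apply measurable_fst measurableSet_Iic, hγ1, hμIic0]
      have hae : ∀ᵐ q ∂γ, (Set.Ioi s).indicator (fun _ => (1:ℝ)) q.1 * b q.2 = b q.2 := by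
        filter_upwards [measure_eq_zero_iff_ae_notMem.mp hγc] with q hq
        have hq' : s < q.1 := by simpa using hq
        rw [Set.indicator_of_mem (show q.1 ∈ Ioi s from hq'), one_mul]
      rw [integral_congr_ae hae, integral_snd γ hγ2 hbint.aestronglyMeasurable,
        integral_qf ν hbint.aestronglyMeasurable]
      have : ∫ u, b (qf ν u) ∂leb01 = ∫ u in Ioo (0:ℝ) 1, b (qf ν u) := rfl
      rw [this, ← hFeq0]
    · -- main case : 0 < F < 1
      set β := b (quantileFun ν F) with hβ
      set c : ℝ × ℝ → ℝ := fun q => b q.2 - β with hc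
      have hcint : Integrable c γ := hbγ.sub (integrable_const β)
      have hcind : Integrable ({q : ℝ × ℝ | s < q.1}.indicator c) γ :=
        hcint.indicator hAmeas
      -- pointwise bound
      have hptwise : ∀ q, {q : ℝ × ℝ | s < q.1}.indicator c q ≤ max (c q) 0 := by
        intro q
        by_cases hq : s < q.1
        · rw [Set.indicator_of_mem (show q ∈ {q : ℝ × ℝ | s < q.1} from hq)]
          exact le_max_left _ _
        · rw [Set.indicator_of_notMem (show q ∉ {q : ℝ × ℝ | s < q.1} from hq)]
          exact le_max_right _ _
      have hmaxint : Integrable (fun q => max (c q) 0) γ := hcint.pos_part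
      have hstep1 : ∫ q, {q : ℝ × ℝ | s < q.1}.indicator c q ∂γ ≤ ∫ q, max (c q) 0 ∂γ :=
        integral_mono hcind hmaxint hptwise
      -- compute ∫ max (c q) 0 ∂γ via ν then leb01
      have hmax_meas : AEStronglyMeasurable (fun y => max (b y - β) 0) ν :=
        ((hbmono.measurable.sub measurable_const).max measurable_const).aestronglyMeasurable
      have hstep2 : ∫ q, max (c q) 0 ∂γ = ∫ u, max (b (qf ν u) - β) 0 ∂leb01 := by
        rw [hc]
        have := integral_snd γ hγ2 (f := fun y => max (b y - β) 0) hmax_meas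
        rw [this, integral_qf ν hmax_meas]
      -- split the integral over (0,1)
      have hsplit : Ioo (0:ℝ) 1 = Ioc 0 F ∪ Ioo F 1 := by
        rw [Set.Ioc_union_Ioo_eq_Ioo hF0 hFlt1]
      have hmaxqf : Integrable (fun u => max (b (qf ν u) - β) 0) leb01 :=
        ((integrable_qf ν hbint).sub (integrable_const β)).pos_part
      have hzero_left : ∫ u in Ioc (0:ℝ) F, max (b (qf ν u) - β) 0 = 0 := by
        refine setIntegral_eq_zero_of_forall_eq_zero (fun u hu => ?_)
        have hu0 : 0 < u := hu.1
        have hu1 : u < 1 := lt_of_le_of_lt hu.2 hFlt1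
        rw [qf_eq_quantile hu0 hu1]
        have hmono : quantileFun ν u ≤ quantileFun ν F :=
          quantile_monoOn hu0 hFlt1 hu.2
        have : b (quantileFun ν u) ≤ β := hβ ▸ hbmono hmono
        simp [max_eq_right, sub_nonpos.mpr this]
      have hval_right : ∫ u in Ioo F 1, max (b (qf ν u) - β) 0
          = ∫ u in Ioo F 1, (b (qf ν u) - β) := by
        refine setIntegral_congr_fun measurableSet_Ioo (fun u hu => ?_)
        have hu0 : 0 < u := lt_trans hFlt0 hu.1
        have hu1 : u < 1 := hu.2
        rw [qf_eq_quantile hu0 hu1]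
        have hmono : quantileFun ν F ≤ quantileFun ν u :=
          quantile_monoOn hFlt0 hu1 hu.1.le
        have : β ≤ b (quantileFun ν u) := hβ ▸ hbmono hmono
        rw [max_eq_left (by linarith)]
      have hdisj : Disjoint (Ioc (0:ℝ) F) (Ioo F 1) := by
        rw [Set.disjoint_left]
        rintro u ⟨_, h2⟩ ⟨h3, _⟩
        exact absurd h3 (not_lt.mpr h2)
      have hsub1 : Ioc (0:ℝ) F ⊆ Ioo 0 1 := fun u hu => ⟨hu.1, lt_of_le_of_lt hu.2 hFlt1⟩
      have hsub2 : Ioo F 1 ⊆ Ioo (0:ℝ) 1 := fun u hu => ⟨lt_trans hFlt0 hu.1, hu.2⟩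
      have hmaxqf' : IntegrableOn (fun u => max (b (qf ν u) - β) 0) (Ioo (0:ℝ) 1) volume :=
        hmaxqf
      have hbqf' : IntegrableOn (fun u => b (qf ν u)) (Ioo (0:ℝ) 1) volume := hbqf
      have hstep3 : ∫ u, max (b (qf ν u) - β) 0 ∂leb01
          = ∫ u in Ioo F 1, (b (qf ν u) - β) := by
        have h0 : ∫ u, max (b (qf ν u) - β) 0 ∂leb01
            = ∫ u in Ioo (0:ℝ) 1, max (b (qf ν u) - β) 0 := rfl
        rw [h0, hsplit, setIntegral_union hdisj measurableSet_Ioo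
          (hmaxqf'.mono_set hsub1) (hmaxqf'.mono_set hsub2), hzero_left, zero_add,
          hval_right]
      -- the measure of the upper interval
      have hγAval : (γ {q : ℝ × ℝ | s < q.1}).toReal = 1 - F := by
        rw [hγA]
        have : μ (Ioi s) = 1 - μ (Iic s) := by
          rw [← compl_Iic]
          exact prob_compl_eq_one_sub measurableSet_Iic
        rw [this, hμIic, ENNReal.toReal_sub_of_le (by
          rw [← ENNReal.ofReal_one]
          exact ENNReal.ofReal_le_ofReal hF1) ENNReal.one_ne_top,
          ENNReal.toReal_one, ENNReal.toReal_ofReal hF0]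
      -- decompose the left-hand side
      have hdecomp : (fun q : ℝ × ℝ => (Set.Ioi s).indicator (fun _ => (1:ℝ)) q.1 * b q.2)
          = fun q => {q : ℝ × ℝ | s < q.1}.indicator c q
              + {q : ℝ × ℝ | s < q.1}.indicator (fun _ => β) q := by
        funext q
        by_cases hq : s < q.1
        · rw [Set.indicator_of_mem (show q.1 ∈ Ioi s from hq),
            Set.indicator_of_mem (show q ∈ {q : ℝ × ℝ | s < q.1} from hq),
            Set.indicator_of_mem (show q ∈ {q : ℝ × ℝ | s < q.1} from hq), one_mul, hc]
          ring
        · rw [Set.indicator_of_notMem (show q.1 ∉ Ioi s from hq),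
            Set.indicator_of_notMem (show q ∉ {q : ℝ × ℝ | s < q.1} from hq),
            Set.indicator_of_notMem (show q ∉ {q : ℝ × ℝ | s < q.1} from hq),
            zero_mul, add_zero]
      have hβind : Integrable ({q : ℝ × ℝ | s < q.1}.indicator (fun _ => β)) γ :=
        (integrable_const β).indicator hAmeas
      have hLHS : ∫ q, (Set.Ioi s).indicator (fun _ => (1:ℝ)) q.1 * b q.2 ∂γ
          = (∫ q, {q : ℝ × ℝ | s < q.1}.indicator c q ∂γ) + (1 - F) * β := by
        rw [hdecomp, integral_add hcind hβind, integral_indicator_const β hAmeas, measureReal_def,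
          hγAval, smul_eq_mul]
      -- compute the right-hand side
      have hRHS : ∫ u in Ioo F 1, b (qf ν u)
          = (∫ u in Ioo F 1, (b (qf ν u) - β)) + (1 - F) * β := by
        rw [integral_sub (hbqf'.mono_set hsub2) (integrableOn_const
          measure_Ioo_lt_top.ne), setIntegral_const, measureReal_def, Real.volume_Ioo, smul_eq_mul,
          ENNReal.toReal_ofReal (by linarith)]
        ring
      rw [hLHS, hRHS]
      have := le_trans hstep1 (le_of_eq (hstep2.trans hstep3))
      linarith

/-! ### Elementary `rpow` estimates -/

section RpowEstimates

variable {p : ℝ} (hp : 1 ≤ p)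
include hp

lemma rpow_pm1_mul_self {t : ℝ} (ht : 0 ≤ t) : t ^ (p - 1) * t = t ^ p := by
  rcases eq_or_lt_of_le ht with ht0 | ht0
  · rw [← ht0, mul_zero, Real.zero_rpow (by linarith : (0:ℝ) < p).ne']
  · have h1 : p - 1 + 1 = p := by ring
    rw [← h1, Real.rpow_add_one (ne_of_gt ht0)]
    rw [h1]

lemma rpow_pm1_le_one_add {t : ℝ} (ht : 0 ≤ t) : t ^ (p - 1) ≤ 1 + t ^ p := by
  rcases le_or_gt t 1 with h1 | h1
  · have : t ^ (p - 1) ≤ 1 := Real.rpow_le_one ht h1 (by linarith)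
    have h2 : 0 ≤ t ^ p := Real.rpow_nonneg ht p
    linarith
  · have : t ^ (p - 1) ≤ t ^ p :=
      Real.rpow_le_rpow_of_exponent_le h1.le (by linarith)
    have h2 : (0:ℝ) ≤ 1 := zero_le_one
    linarith

lemma add_rpow_le_two_rpow {a b : ℝ} (ha : 0 ≤ a) (hb : 0 ≤ b) :
    (a + b) ^ p ≤ 2 ^ p * (a ^ p + b ^ p) := by
  have h2 : a + b ≤ 2 * max a b := by
    rcases le_total a b with h | h
    · rw [max_eq_right h]; linarith
    · rw [max_eq_left h]; linarith
  have h3 : (a + b) ^ p ≤ (2 * max a b) ^ p :=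
    Real.rpow_le_rpow (by linarith) h2 (by linarith)
  have h4 : (2 * max a b) ^ p = 2 ^ p * (max a b) ^ p :=
    Real.mul_rpow (by norm_num) (le_max_of_le_left ha)
  have h5 : (max a b) ^ p ≤ a ^ p + b ^ p := by
    rcases le_total a b with h | h
    · rw [max_eq_right h]
      have := Real.rpow_nonneg ha p
      linarith
    · rw [max_eq_left h]
      have := Real.rpow_nonneg hb p
      linarith
  have h6 : (0:ℝ) ≤ 2 ^ p := Real.rpow_nonneg (by norm_num) p
  calc (a + b) ^ p ≤ 2 ^ p * (max a b) ^ p := by rw [← h4]; exact h3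
    _ ≤ 2 ^ p * (a ^ p + b ^ p) := by nlinarith

lemma abs_sub_rpow_le (x y : ℝ) : |x - y| ^ p ≤ 2 ^ p * (|x| ^ p + |y| ^ p) := by
  have h1 : |x - y| ≤ |x| + |y| := abs_sub x y
  have h3 : |x - y| ^ p ≤ (|x| + |y|) ^ p :=
    Real.rpow_le_rpow (abs_nonneg _) h1 (by linarith)
  exact h3.trans (add_rpow_le_two_rpow hp (abs_nonneg x) (abs_nonneg y))

lemma sum_abs_rpow_le (x y : ℝ) : (|x| + |y|) ^ p ≤ 2 ^ p * (|x| ^ p + |y| ^ p) :=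
  add_rpow_le_two_rpow hp (abs_nonneg x) (abs_nonneg y)

lemma continuous_abs_rpow : Continuous fun t : ℝ => |t| ^ p :=
  (Real.continuous_rpow_const (by linarith)).comp continuous_abs

end RpowEstimates

/-! ### The kernel `K` and its properties -/

/-- Signed indicator of the interval from `0` to `x`. -/
noncomputable def wind (x s : ℝ) : ℝ :=
  (Set.Ico 0 x).indicator (fun _ => (1:ℝ)) s - (Set.Ico x 0).indicator (fun _ => (1:ℝ)) s

/-- The integrand `y ↦ hder p s - hder p (s - y)`. -/
noncomputable def phi (p s y : ℝ) : ℝ := hder p s - hder p (s - y)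

/-- The kernel appearing in the double-integral representation. -/
noncomputable def Kker (p : ℝ) (q : ℝ × ℝ) (s : ℝ) : ℝ := wind q.1 s * phi p s q.2

section Kker

variable {p : ℝ} (hp : 1 ≤ p)

lemma wind_eq (x s : ℝ) :
    wind x s = (if s < x then (1:ℝ) else 0) - (if s < 0 then (1:ℝ) else 0) := by
  by_cases h1 : s < 0
  · by_cases h2 : s < x
    · simp [wind, Set.indicator_apply, Set.mem_Ico, h1, h2, not_le.mpr h1, not_le.mpr h2]
    · simp [wind, Set.indicator_apply, Set.mem_Ico, h1, h2, not_le.mpr h1, not_lt.mp h2]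
  · by_cases h2 : s < x
    · simp [wind, Set.indicator_apply, Set.mem_Ico, h1, h2, not_lt.mp h1]
    · simp [wind, Set.indicator_apply, Set.mem_Ico, h1, h2, not_lt.mp h1, not_lt.mp h2]

include hp

lemma phi_mono (s : ℝ) : Monotone (phi p s) := by
  intro y1 y2 h
  rw [phi, phi, sub_le_sub_iff_left]
  exact hder_mono hp (by linarith)

lemma abs_phi_le (s y : ℝ) : |phi p s y| ≤ p * |s| ^ (p - 1) + p * |s - y| ^ (p - 1) := by
  rw [phi]
  refine (abs_sub _ _).trans ?_
  rw [abs_hder hp, abs_hder hp]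

lemma phi_measurable (s : ℝ) : Measurable (phi p s) :=
  measurable_const.sub ((hder_measurable hp).comp (measurable_const.sub measurable_id))

lemma abs_phi_le' (s y : ℝ) :
    |phi p s y| ≤ (p * |s| ^ (p - 1) + p + p * 2 ^ p * |s| ^ p) + p * 2 ^ p * |y| ^ p := by
  have h1 := abs_phi_le hp s y
  have h2 : |s - y| ^ (p - 1) ≤ 1 + |s - y| ^ p := rpow_pm1_le_one_add hp (abs_nonneg _)
  have h3 : |s - y| ^ p ≤ 2 ^ p * (|s| ^ p + |y| ^ p) := abs_sub_rpow_le hp s y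
  have hp0 : (0:ℝ) ≤ p := by linarith
  nlinarith [Real.rpow_nonneg (abs_nonneg (s - y)) (p - 1)]

lemma phi_integrable {ν : Measure ℝ} [IsProbabilityMeasure ν]
    (hνp : Integrable (fun x => |x| ^ p) ν) (s : ℝ) : Integrable (phi p s) ν := by
  refine Integrable.mono'
    (g := fun y => (p * |s| ^ (p - 1) + p + p * 2 ^ p * |s| ^ p) + p * 2 ^ p * |y| ^ p)
    ((integrable_const _).add (hνp.const_mul _)) (phi_measurable hp s).aestronglyMeasurable
    (MeasureTheory.ae_of_all _ fun y => abs_phi_le' hp s y)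


lemma Kker_eq_indicator (q : ℝ × ℝ) :
    Kker p q = fun s => (Set.Ico 0 q.1).indicator (fun s => phi p s q.2) s
      - (Set.Ico q.1 0).indicator (fun s => phi p s q.2) s := by
  funext s
  rw [Kker, wind]
  by_cases h1 : s ∈ Set.Ico (0:ℝ) q.1
  · have h2 : s ∉ Set.Ico q.1 (0:ℝ) := fun h => absurd h1.1 (not_le.mpr h.2)
    rw [Set.indicator_of_mem h1, Set.indicator_of_mem h1, Set.indicator_of_notMem h2,
      Set.indicator_of_notMem h2, sub_zero, sub_zero, one_mul]
  · by_cases h2 : s ∈ Set.Ico q.1 (0:ℝ)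
    · rw [Set.indicator_of_mem h2, Set.indicator_of_mem h2, Set.indicator_of_notMem h1,
        Set.indicator_of_notMem h1, zero_sub, zero_sub, neg_one_mul]
    · simp [Set.indicator_of_notMem h1, Set.indicator_of_notMem h2]

lemma phi_integrableOn_Ico (y a b : ℝ) :
    IntegrableOn (fun s => phi p s y) (Set.Ico a b) volume := by
  rcases le_or_gt b a with h | h
  · rw [Set.Ico_eq_empty (not_lt.mpr h)]
    exact integrableOn_empty
  · have h1 : IntervalIntegrable (fun s => phi p s y) volume a b :=
      (hder_intervalIntegrable hp a b).sub (hder_shift_intervalIntegrable hp y a b)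
    have h2 : IntegrableOn (fun s => phi p s y) (Set.Ioc a b) volume :=
      (intervalIntegrable_iff_integrableOn_Ioc_of_le h.le).mp h1
    exact h2.congr_set_ae MeasureTheory.Ico_ae_eq_Ioc

lemma Kker_integrable_fixed (q : ℝ × ℝ) : Integrable (Kker p q) volume := by
  rw [Kker_eq_indicator hp]
  exact ((phi_integrableOn_Ico hp q.2 0 q.1).integrable_indicator measurableSet_Ico).sub
    ((phi_integrableOn_Ico hp q.2 q.1 0).integrable_indicator measurableSet_Ico)

lemma integral_Kker (q : ℝ × ℝ) :
    ∫ s, Kker p q s = |q.1| ^ p + |q.2| ^ p - |q.1 - q.2| ^ p := by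
  rw [← hder_star hp q.1 q.2]
  rw [Kker_eq_indicator hp]
  rw [integral_sub ((phi_integrableOn_Ico hp q.2 0 q.1).integrable_indicator measurableSet_Ico)
    ((phi_integrableOn_Ico hp q.2 q.1 0).integrable_indicator measurableSet_Ico)]
  rw [integral_indicator measurableSet_Ico, integral_indicator measurableSet_Ico]
  rcases le_or_gt 0 q.1 with h | h
  · rw [Set.Ico_eq_empty (not_lt.mpr h), setIntegral_empty, sub_zero,
      MeasureTheory.integral_Ico_eq_integral_Ioo, ← MeasureTheory.integral_Ioc_eq_integral_Ioo,
      intervalIntegral.integral_of_le h]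
    rfl
  · rw [Set.Ico_eq_empty (not_lt.mpr (by linarith)), setIntegral_empty, zero_sub,
      MeasureTheory.integral_Ico_eq_integral_Ioo, ← MeasureTheory.integral_Ioc_eq_integral_Ioo,
      ← intervalIntegral.integral_of_le h.le, ← intervalIntegral.integral_symm]
    rfl


lemma Kker_measurable : Measurable (Function.uncurry (Kker p)) := by
  have h1 : Measurable fun z : (ℝ × ℝ) × ℝ => wind z.1.1 z.2 := by
    have : (fun z : (ℝ × ℝ) × ℝ => wind z.1.1 z.2)
        = fun z => (if z.2 < z.1.1 then (1:ℝ) else 0) - (if z.2 < 0 then (1:ℝ) else 0) := by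
      funext z; exact wind_eq z.1.1 z.2
    rw [this]
    exact Measurable.sub
      (Measurable.ite (measurableSet_lt measurable_snd (measurable_fst.comp measurable_fst))
        measurable_const measurable_const)
      (Measurable.ite (measurableSet_lt measurable_snd measurable_const)
        measurable_const measurable_const)
  have h2 : Measurable fun z : (ℝ × ℝ) × ℝ => phi p z.2 z.1.2 := by
    refine Measurable.sub ((hder_measurable hp).comp measurable_snd)
      ((hder_measurable hp).comp (measurable_snd.sub (measurable_snd.comp measurable_fst)))
  exact h1.mul h2

lemma norm_Kker_le (q : ℝ × ℝ) (s : ℝ) :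
    ‖Kker p q s‖ ≤ (Set.Ico 0 q.1 ∪ Set.Ico q.1 0).indicator
      (fun _ => p * |q.1| ^ (p - 1) + p * (|q.1| + |q.2|) ^ (p - 1)) s := by
  have hphi : s ∈ Set.Ico 0 q.1 ∪ Set.Ico q.1 0 →
      |phi p s q.2| ≤ p * |q.1| ^ (p - 1) + p * (|q.1| + |q.2|) ^ (p - 1) := by
    intro hs
    have habs : |s| ≤ |q.1| := by
      rcases hs with h | h
      · rw [abs_of_nonneg h.1, abs_of_nonneg (le_trans h.1 h.2.le)]; exact h.2.le
      · rw [abs_of_neg h.2, abs_of_neg (lt_of_le_of_lt h.1 h.2)]; linarith [h.1]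
    have h2 : |s - q.2| ≤ |q.1| + |q.2| := (abs_sub s q.2).trans (by linarith)
    have h3 := abs_phi_le hp s q.2
    have h4 : |s| ^ (p - 1) ≤ |q.1| ^ (p - 1) :=
      Real.rpow_le_rpow (abs_nonneg _) habs (by linarith)
    have h5 : |s - q.2| ^ (p - 1) ≤ (|q.1| + |q.2|) ^ (p - 1) :=
      Real.rpow_le_rpow (abs_nonneg _) h2 (by linarith)
    have hp0 : (0:ℝ) ≤ p := by linarith
    nlinarith
  by_cases hs : s ∈ Set.Ico 0 q.1 ∪ Set.Ico q.1 0
  · rw [Set.indicator_of_mem hs]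
    rw [Real.norm_eq_abs, Kker, abs_mul]
    have hw : |wind q.1 s| ≤ 1 := by
      rw [wind_eq]
      by_cases h1 : s < q.1 <;> by_cases h2 : s < 0 <;> simp [h1, h2]
    calc |wind q.1 s| * |phi p s q.2| ≤ 1 * |phi p s q.2| :=
          mul_le_mul_of_nonneg_right hw (abs_nonneg _)
      _ = |phi p s q.2| := one_mul _
      _ ≤ _ := hphi hs
  · rw [Set.indicator_of_notMem hs]
    have h0 : Kker p q s = 0 := by
      have h := congrFun (Kker_eq_indicator hp q) s
      rw [h, Set.indicator_of_notMem (fun hm => hs (Set.mem_union_left _ hm)),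
        Set.indicator_of_notMem (fun hm => hs (Set.mem_union_right _ hm)), sub_zero]
    rw [h0, norm_zero]

lemma integral_norm_Kker_le (q : ℝ × ℝ) :
    ∫ s, ‖Kker p q s‖ ≤ p * |q.1| ^ p + p * (|q.1| + |q.2|) ^ p := by
  set M := p * |q.1| ^ (p - 1) + p * (|q.1| + |q.2|) ^ (p - 1) with hM
  have hMnn : 0 ≤ M := by
    have := Real.rpow_nonneg (abs_nonneg q.1) (p - 1)
    have := Real.rpow_nonneg (add_nonneg (abs_nonneg q.1) (abs_nonneg q.2)) (p - 1)
    have hp0 : (0:ℝ) ≤ p := by linarith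
    nlinarith
  have hset : MeasurableSet (Set.Ico (0:ℝ) q.1 ∪ Set.Ico q.1 0) :=
    measurableSet_Ico.union measurableSet_Ico
  have hvolE : volume (Set.Ico (0:ℝ) q.1 ∪ Set.Ico q.1 0) = ENNReal.ofReal |q.1| := by
    rcases le_or_gt 0 q.1 with h | h
    · rw [Set.Ico_eq_empty (not_lt.mpr h), Set.union_empty, Real.volume_Ico, sub_zero,
        abs_of_nonneg h]
    · rw [Set.Ico_eq_empty (not_lt.mpr h.le), Set.empty_union, Real.volume_Ico, zero_sub,
        abs_of_neg h]
  have h1 : ∫ s, ‖Kker p q s‖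
      ≤ ∫ s, (Set.Ico 0 q.1 ∪ Set.Ico q.1 0).indicator (fun _ => M) s :=
    integral_mono (Kker_integrable_fixed hp q).norm
      ((integrableOn_const (by rw [hvolE]; exact ENNReal.ofReal_ne_top)).integrable_indicator hset)
      (norm_Kker_le hp q)
  rw [integral_indicator_const M hset, measureReal_def, hvolE, ENNReal.toReal_ofReal (abs_nonneg _),
    smul_eq_mul] at h1
  refine h1.trans ?_
  rw [hM]
  have e1 : |q.1| ^ (p - 1) * |q.1| = |q.1| ^ p := rpow_pm1_mul_self hp (abs_nonneg _)
  have e2 : (|q.1| + |q.2|) ^ (p - 1) * |q.1| ≤ (|q.1| + |q.2|) ^ p := by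
    have h3 : (|q.1| + |q.2|) ^ (p - 1) * (|q.1| + |q.2|) = (|q.1| + |q.2|) ^ p :=
      rpow_pm1_mul_self hp (add_nonneg (abs_nonneg _) (abs_nonneg _))
    have h4 : (0:ℝ) ≤ (|q.1| + |q.2|) ^ (p - 1) :=
      Real.rpow_nonneg (add_nonneg (abs_nonneg _) (abs_nonneg _)) _
    nlinarith [abs_nonneg q.2]
  have hp0 : (0:ℝ) ≤ p := by linarith
  nlinarith [abs_nonneg q.1]


lemma ind_mul_eq_indicator (s : ℝ) (g : ℝ → ℝ) :
    (fun q : ℝ × ℝ => (Set.Ioi s).indicator (fun _ => (1:ℝ)) q.1 * g q.2)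
      = {q : ℝ × ℝ | s < q.1}.indicator (fun q => g q.2) := by
  funext q
  by_cases hq : s < q.1
  · rw [Set.indicator_of_mem (show q.1 ∈ Set.Ioi s from hq),
      Set.indicator_of_mem (show q ∈ {q : ℝ × ℝ | s < q.1} from hq), one_mul]
  · rw [Set.indicator_of_notMem (show q.1 ∉ Set.Ioi s from hq),
      Set.indicator_of_notMem (show q ∉ {q : ℝ × ℝ | s < q.1} from hq), zero_mul]

variable {μ ν : Measure ℝ} [IsProbabilityMeasure μ] [IsProbabilityMeasure ν]

lemma Kker_prod_integrable (γ : Measure (ℝ × ℝ)) [IsProbabilityMeasure γ]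
    (hγ1 : γ.map Prod.fst = μ) (hγ2 : γ.map Prod.snd = ν)
    (hμp : Integrable (fun x => |x| ^ p) μ) (hνp : Integrable (fun x => |x| ^ p) ν) :
    Integrable (Function.uncurry (Kker p)) (γ.prod volume) := by
  have hxint : Integrable (fun q : ℝ × ℝ => |q.1| ^ p) γ := integrable_fst γ hγ1 hμp
  have hyint : Integrable (fun q : ℝ × ℝ => |q.2| ^ p) γ := integrable_snd γ hγ2 hνp
  refine (integrable_prod_iff (Kker_measurable hp).aestronglyMeasurable).mpr
    ⟨MeasureTheory.ae_of_all _ fun q => Kker_integrable_fixed hp q, ?_⟩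
  have hsum : Integrable (fun q : ℝ × ℝ => (|q.1| + |q.2|) ^ p) γ := by
    refine Integrable.mono' (g := fun q => 2 ^ p * (|q.1| ^ p + |q.2| ^ p))
      ((hxint.add hyint).const_mul _) ?_ (MeasureTheory.ae_of_all _ fun q => ?_)
    · refine Continuous.aestronglyMeasurable ?_
      refine Continuous.rpow_const ?_ (fun _ => Or.inr (by linarith)) 
      exact (continuous_abs.comp continuous_fst).add (continuous_abs.comp continuous_snd)
    · rw [Real.norm_eq_abs,
        abs_of_nonneg (Real.rpow_nonneg (add_nonneg (abs_nonneg _) (abs_nonneg _)) _)]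
      exact sum_abs_rpow_le hp q.1 q.2
  have hD : Integrable (fun q : ℝ × ℝ => p * |q.1| ^ p + p * (|q.1| + |q.2|) ^ p) γ :=
    (hxint.const_mul p).add (hsum.const_mul p)
  refine hD.mono' ?_ (MeasureTheory.ae_of_all _ fun q => ?_)
  · exact ((Kker_measurable hp).aestronglyMeasurable.norm).integral_prod_right'
  · rw [Real.norm_eq_abs, abs_of_nonneg (integral_nonneg fun s => norm_nonneg _)]
    exact integral_norm_Kker_le hp q

lemma integral_Kker_slice (γ : Measure (ℝ × ℝ)) [IsProbabilityMeasure γ]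
    (hγ2 : γ.map Prod.snd = ν) (hνp : Integrable (fun x => |x| ^ p) ν) (s : ℝ) :
    ∫ q, Kker p q s ∂γ
      = (∫ q, (Set.Ioi s).indicator (fun _ => (1:ℝ)) q.1 * phi p s q.2 ∂γ)
        - (if s < 0 then (1:ℝ) else 0) * ∫ y, phi p s y ∂ν := by
  have hphiν : Integrable (phi p s) ν := phi_integrable hp hνp s
  have hphiγ : Integrable (fun q : ℝ × ℝ => phi p s q.2) γ := integrable_snd γ hγ2 hphiν
  have hindφ : Integrable
      (fun q : ℝ × ℝ => (Set.Ioi s).indicator (fun _ => (1:ℝ)) q.1 * phi p s q.2) γ := by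
    rw [ind_mul_eq_indicator hp]
    exact hphiγ.indicator (measurable_fst measurableSet_Ioi)
  have heq : ∀ q : ℝ × ℝ, Kker p q s
      = (Set.Ioi s).indicator (fun _ => (1:ℝ)) q.1 * phi p s q.2
        - (if s < 0 then (1:ℝ) else 0) * phi p s q.2 := by
    intro q
    rw [Kker, wind_eq]
    have : (Set.Ioi s).indicator (fun _ => (1:ℝ)) q.1 = if s < q.1 then (1:ℝ) else 0 := by
      by_cases hq : s < q.1
      · rw [Set.indicator_of_mem (show q.1 ∈ Set.Ioi s from hq), if_pos hq]
      · rw [Set.indicator_of_notMem (show q.1 ∉ Set.Ioi s from hq), if_neg hq]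
    rw [this]
    ring
  have : ∫ q, Kker p q s ∂γ
      = ∫ q, ((Set.Ioi s).indicator (fun _ => (1:ℝ)) q.1 * phi p s q.2
          - (if s < 0 then (1:ℝ) else 0) * phi p s q.2) ∂γ := by
    exact integral_congr_ae (MeasureTheory.ae_of_all _ heq)
  rw [this, integral_sub hindφ (hphiγ.const_mul _), integral_const_mul,
    integral_snd γ hγ2 hphiν.aestronglyMeasurable]

lemma cost_repr (γ : Measure (ℝ × ℝ)) [IsProbabilityMeasure γ]
    (hγ1 : γ.map Prod.fst = μ) (hγ2 : γ.map Prod.snd = ν)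
    (hμp : Integrable (fun x => |x| ^ p) μ) (hνp : Integrable (fun x => |x| ^ p) ν) :
    ∫ q, |q.1 - q.2| ^ p ∂γ
      = (∫ x, |x| ^ p ∂μ) + (∫ y, |y| ^ p ∂ν) - ∫ s, (∫ q, Kker p q s ∂γ) := by
  have hjoint := Kker_prod_integrable hp γ hγ1 hγ2 hμp hνp
  have hswap : ∫ q, (∫ s, Kker p q s) ∂γ = ∫ s, (∫ q, Kker p q s ∂γ) :=
    integral_integral_swap hjoint
  have hxint : Integrable (fun q : ℝ × ℝ => |q.1| ^ p) γ := integrable_fst γ hγ1 hμp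
  have hyint : Integrable (fun q : ℝ × ℝ => |q.2| ^ p) γ := integrable_snd γ hγ2 hνp
  have hKint : Integrable (fun q : ℝ × ℝ => ∫ s, Kker p q s) γ := hjoint.integral_prod_left
  have hcongr : ∫ q, |q.1 - q.2| ^ p ∂γ
      = ∫ q, (|q.1| ^ p + |q.2| ^ p - ∫ s, Kker p q s) ∂γ := by
    refine integral_congr_ae (MeasureTheory.ae_of_all _ fun q => ?_)
    show |q.1 - q.2| ^ p = |q.1| ^ p + |q.2| ^ p - ∫ s, Kker p q s
    rw [integral_Kker hp q]
    ring
  have hadd : Integrable (fun q : ℝ × ℝ => |q.1| ^ p + |q.2| ^ p) γ := hxint.add hyint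
  rw [hcongr, integral_sub hadd hKint, integral_add hxint hyint, hswap,
    ← integral_map measurable_fst.aemeasurable (f := fun x => |x| ^ p)
      (by rw [hγ1]; exact hμp.aestronglyMeasurable),
    ← integral_map measurable_snd.aemeasurable (f := fun y => |y| ^ p)
      (by rw [hγ2]; exact hνp.aestronglyMeasurable), hγ1, hγ2]


lemma qpair_measurable : Measurable (fun u => (qf μ u, qf ν u)) :=
  (qf_measurable (μ := μ)).prodMk (qf_measurable (μ := ν))

lemma gstar_prob : IsProbabilityMeasure (Measure.map (fun u => (qf μ u, qf ν u)) leb01) :=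
  Measure.isProbabilityMeasure_map (qpair_measurable hp).aemeasurable

lemma gstar_fst : (Measure.map (fun u => (qf μ u, qf ν u)) leb01).map Prod.fst = μ := by
  rw [Measure.map_map measurable_fst (qpair_measurable hp)]
  have : (Prod.fst ∘ fun u => (qf μ u, qf ν u)) = qf μ := rfl
  rw [this, map_qf_eq]

lemma gstar_snd : (Measure.map (fun u => (qf μ u, qf ν u)) leb01).map Prod.snd = ν := by
  rw [Measure.map_map measurable_snd (qpair_measurable hp)]
  have : (Prod.snd ∘ fun u => (qf μ u, qf ν u)) = qf ν := rfl
  rw [this, map_qf_eq]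

lemma gstar_slice_eq {b : ℝ → ℝ} (hbmono : Monotone b) (s : ℝ) :
    ∫ q, (Set.Ioi s).indicator (fun _ => (1:ℝ)) q.1 * b q.2
        ∂(Measure.map (fun u => (qf μ u, qf ν u)) leb01)
      = ∫ u in Ioo (cdfFun μ s) 1, b (qf ν u) := by
  have hmeas : Measurable fun q : ℝ × ℝ => (Set.Ioi s).indicator (fun _ => (1:ℝ)) q.1 * b q.2 :=
    ((measurable_const.indicator measurableSet_Ioi).comp measurable_fst).mul
      (hbmono.measurable.comp measurable_snd)
  rw [integral_map (qpair_measurable hp).aemeasurable hmeas.aestronglyMeasurable]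
  have h1 : ∫ u, (Set.Ioi s).indicator (fun _ => (1:ℝ)) (qf μ u) * b (qf ν u) ∂leb01
      = ∫ u in Ioo (0:ℝ) 1, (Set.Ioi (cdfFun μ s)).indicator (fun u => b (qf ν u)) u := by
    refine setIntegral_congr_fun measurableSet_Ioo (fun u hu => ?_)
    by_cases hcu : cdfFun μ s < u
    · have hlt : s < quantileFun μ u := (lt_quantile_iff hu.1 hu.2).mpr hcu
      rw [qf_eq_quantile hu.1 hu.2, Set.indicator_of_mem (show quantileFun μ u ∈ Set.Ioi s from hlt),
        Set.indicator_of_mem (show u ∈ Set.Ioi (cdfFun μ s) from hcu), one_mul]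
    · have hnlt : ¬ s < quantileFun μ u := by
        rw [lt_quantile_iff hu.1 hu.2]; exact hcu
      rw [qf_eq_quantile hu.1 hu.2,
        Set.indicator_of_notMem (show quantileFun μ u ∉ Set.Ioi s from hnlt),
        Set.indicator_of_notMem (show u ∉ Set.Ioi (cdfFun μ s) from hcu), zero_mul]
  rw [h1, setIntegral_indicator measurableSet_Ioi]
  have h2 : Ioo (0:ℝ) 1 ∩ Ioi (cdfFun μ s) = Ioo (cdfFun μ s) 1 := by
    have hF0 : 0 ≤ cdfFun μ s := cdfFun_nonneg s
    ext u
    simp only [mem_inter_iff, mem_Ioo, mem_Ioi]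
    constructor
    · rintro ⟨⟨_, h2⟩, h3⟩; exact ⟨h3, h2⟩
    · rintro ⟨h3, h2⟩; exact ⟨⟨lt_of_le_of_lt hF0 h3, h2⟩, h3⟩
  rw [h2]

lemma cost_min (γ : Measure (ℝ × ℝ)) [IsProbabilityMeasure γ]
    (hγ1 : γ.map Prod.fst = μ) (hγ2 : γ.map Prod.snd = ν)
    (hμp : Integrable (fun x => |x| ^ p) μ) (hνp : Integrable (fun x => |x| ^ p) ν) :
    ∫ q, |q.1 - q.2| ^ p ∂(Measure.map (fun u => (qf μ u, qf ν u)) leb01)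
      ≤ ∫ q, |q.1 - q.2| ^ p ∂γ := by
  haveI : IsProbabilityMeasure (Measure.map (fun u => (qf μ u, qf ν u)) leb01) := gstar_prob hp
  rw [cost_repr hp γ hγ1 hγ2 hμp hνp,
    cost_repr hp (Measure.map (fun u => (qf μ u, qf ν u)) leb01) (gstar_fst hp) (gstar_snd hp)
      hμp hνp]
  have key : ∫ s, (∫ q, Kker p q s ∂γ)
      ≤ ∫ s, (∫ q, Kker p q s ∂(Measure.map (fun u => (qf μ u, qf ν u)) leb01)) := by
    refine integral_mono ?_ ?_ ?_
    · simpa using (Kker_prod_integrable hp γ hγ1 hγ2 hμp hνp).integral_prod_right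
    · simpa using (Kker_prod_integrable hp (Measure.map (fun u => (qf μ u, qf ν u)) leb01)
        (gstar_fst hp) (gstar_snd hp) hμp hνp).integral_prod_right
    · intro s
      have hphiν : Integrable (phi p s) ν := phi_integrable hp hνp s
      have hγslice := integral_Kker_slice hp γ hγ2 hνp s
      have hsslice := integral_Kker_slice hp (Measure.map (fun u => (qf μ u, qf ν u)) leb01)
        (gstar_snd hp) hνp s
      have hA := lemmaA γ hγ1 hγ2 (phi_mono hp s) hphiν s
      have hEq := gstar_slice_eq (μ := μ) (ν := ν) hp (phi_mono hp s) s
      show (∫ q, Kker p q s ∂γ)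
        ≤ ∫ q, Kker p q s ∂(Measure.map (fun u => (qf μ u, qf ν u)) leb01)
      rw [hγslice, hsslice, hEq]
      linarith
  linarith

end Kker

lemma gstar_cost {p : ℝ} (hp : 1 ≤ p) {μ ν : Measure ℝ}
    [IsProbabilityMeasure μ] [IsProbabilityMeasure ν] :
    ∫ q, |q.1 - q.2| ^ p ∂(Measure.map (fun u => (qf μ u, qf ν u)) leb01)
      = ∫ u in (0 : ℝ)..1, |quantileFun μ u - quantileFun ν u| ^ p := by
  have hcont : Continuous fun q : ℝ × ℝ => |q.1 - q.2| ^ p :=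
    (continuous_abs_rpow hp).comp (continuous_fst.sub continuous_snd)
  rw [integral_map (qpair_measurable hp).aemeasurable hcont.aestronglyMeasurable]
  have h1 : ∫ u, |qf μ u - qf ν u| ^ p ∂leb01
      = ∫ u in Ioo (0:ℝ) 1, |quantileFun μ u - quantileFun ν u| ^ p := by
    refine setIntegral_congr_fun measurableSet_Ioo (fun u hu => ?_)
    rw [qf_eq_quantile hu.1 hu.2, qf_eq_quantile hu.1 hu.2]
  rw [h1, ← MeasureTheory.integral_Ioc_eq_integral_Ioo,
    ← intervalIntegral.integral_of_le zero_le_one]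

/-- one-dimensional explicit representation of the p-Wasserstein distance:
W_p(μ,ν)^p, defined as the infimum over couplings of ∫|x−y|^p dγ, equals
∫₀¹ |F_μ⁻¹(u) − F_ν⁻¹(u)|^p du. -/
theorem wasserstein_quantile_representation
    (p : ℝ) (hp : 1 ≤ p)
    (μ ν : Measure ℝ) [IsProbabilityMeasure μ] [IsProbabilityMeasure ν]
    (hμp : Integrable (fun x => |x| ^ p) μ) (hνp : Integrable (fun x => |x| ^ p) ν) :
    sInf {c : ℝ | ∃ γ : Measure (ℝ × ℝ),
        IsProbabilityMeasure γ ∧ γ.map Prod.fst = μ ∧ γ.map Prod.snd = ν ∧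
        c = ∫ q, |q.1 - q.2| ^ p ∂γ}
      = ∫ u in (0 : ℝ)..1, |quantileFun μ u - quantileFun ν u| ^ p := by
  haveI : IsProbabilityMeasure (Measure.map (fun u => (qf μ u, qf ν u)) leb01) := gstar_prob hp
  have hmem : (∫ q, |q.1 - q.2| ^ p ∂(Measure.map (fun u => (qf μ u, qf ν u)) leb01))
      ∈ {c : ℝ | ∃ γ : Measure (ℝ × ℝ),
        IsProbabilityMeasure γ ∧ γ.map Prod.fst = μ ∧ γ.map Prod.snd = ν ∧
        c = ∫ q, |q.1 - q.2| ^ p ∂γ} :=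
    ⟨Measure.map (fun u => (qf μ u, qf ν u)) leb01, this, gstar_fst hp, gstar_snd hp, rfl⟩
  have hlb : ∀ c ∈ {c : ℝ | ∃ γ : Measure (ℝ × ℝ),
        IsProbabilityMeasure γ ∧ γ.map Prod.fst = μ ∧ γ.map Prod.snd = ν ∧
        c = ∫ q, |q.1 - q.2| ^ p ∂γ},
      (∫ q, |q.1 - q.2| ^ p ∂(Measure.map (fun u => (qf μ u, qf ν u)) leb01)) ≤ c := by
    rintro c ⟨γ, hγp, h1, h2, rfl⟩
    haveI := hγp
    exact cost_min hp γ h1 h2 hμp hνp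
  rw [IsLeast.csInf_eq ⟨hmem, hlb⟩, gstar_cost hp]
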